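/- If A ∈ sp(4,ℂ) is nilpotent with A³ ≠ 0 (equivalently, the kernel of A has dimension 1), then there exist B ∈ Sp(4,ℂ) and λ ∈ ℂ such that B⁻¹AB equals the matrix N_λ with rows (0,1,λ,0), (0,0,0,1), (0,0,0,0), (0,0,−1,0). -/

import Mathlib

open Matrix
/-- The 4×4 standard symplectic matrix `J = [[0, I], [-I, 0]]`. -/
noncomputable def J4 : Matrix (Fin 4) (Fin 4) ℂ :=
  !![0, 0, 1, 0;
     0, 0, 0, 1;
     -1, 0, 0, 0;
     0, -1, 0, 0]

noncomputable def omg (x y : Fin 4 → ℂ) : ℂ := x ⬝ᵥ J4 *ᵥ y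

lemma omg_expand (x y : Fin 4 → ℂ) :
    omg x y = x 0 * y 2 + x 1 * y 3 - x 2 * y 0 - x 3 * y 1 := by
  simp [omg, J4, dotProduct, Matrix.mulVec, Fin.sum_univ_four, Matrix.vecHead, Matrix.vecTail]
  ring


lemma omg_skew (x y : Fin 4 → ℂ) : omg x y = - omg y x := by
  simp only [omg_expand]; ring

lemma omg_self (x : Fin 4 → ℂ) : omg x x = 0 := by
  simp only [omg_expand]; ring

lemma omg_neg_left (x y : Fin 4 → ℂ) : omg (-x) y = - omg x y := by
  simp only [omg_expand, Pi.neg_apply]; ring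

lemma omg_neg_right (x y : Fin 4 → ℂ) : omg x (-y) = - omg x y := by
  simp only [omg_expand, Pi.neg_apply]; ring

lemma omg_sub_left (x y z : Fin 4 → ℂ) : omg (x - y) z = omg x z - omg y z := by
  simp only [omg_expand, Pi.sub_apply]; ring

lemma omg_sub_right (x y z : Fin 4 → ℂ) : omg x (y - z) = omg x y - omg x z := by
  simp only [omg_expand, Pi.sub_apply]; ring

lemma omg_smul_left (c : ℂ) (x y : Fin 4 → ℂ) : omg (c • x) y = c * omg x y := by
  simp only [omg_expand, Pi.smul_apply, smul_eq_mul]; ring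

lemma omg_smul_right (c : ℂ) (x y : Fin 4 → ℂ) : omg x (c • y) = c * omg x y := by
  simp only [omg_expand, Pi.smul_apply, smul_eq_mul]; ring

lemma omg_zero_right (x : Fin 4 → ℂ) : omg x 0 = 0 := by
  simp only [omg_expand, Pi.zero_apply]; ring

lemma conj_apply' (B : Matrix (Fin 4) (Fin 4) ℂ) (i j : Fin 4) :
    (Bᵀ * J4 * B) i j = omg (fun k => B k i) (fun k => B k j) := by
  simp only [omg, Matrix.mul_apply, dotProduct, Matrix.mulVec, Matrix.transpose_apply,
    Finset.sum_mul, Finset.mul_sum]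
  rw [Finset.sum_comm]
  exact Finset.sum_congr rfl fun k _ => Finset.sum_congr rfl fun l _ => by ring

lemma sp_move (A : Matrix (Fin 4) (Fin 4) ℂ) (hsp : Aᵀ * J4 + J4 * A = 0)
    (x y : Fin 4 → ℂ) : omg (A *ᵥ x) y = - omg x (A *ᵥ y) := by
  have h : Aᵀ * J4 = -(J4 * A) := eq_neg_of_add_eq_zero_left hsp
  show (A *ᵥ x) ⬝ᵥ J4 *ᵥ y = -(x ⬝ᵥ J4 *ᵥ (A *ᵥ y))
  rw [← Matrix.vecMul_transpose, ← Matrix.dotProduct_mulVec, Matrix.mulVec_mulVec, h]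
  simp [Matrix.neg_mulVec]

lemma quad_zero (S : Matrix (Fin 4) (Fin 4) ℂ) (hsym : Sᵀ = S)
    (h : ∀ v, v ⬝ᵥ S *ᵥ v = 0) : S = 0 := by
  ext i j
  have hs := congrFun (congrFun hsym i) j
  rw [Matrix.transpose_apply] at hs
  have key : ∀ a b : Fin 4, Pi.single a (1:ℂ) ⬝ᵥ S *ᵥ Pi.single b 1 = S a b := by
    intro a b
    rw [Matrix.mulVec_single, single_dotProduct]
    simp
  have h1 := h (Pi.single i 1 + Pi.single j 1)
  have h2 := h (Pi.single i 1)
  have h3 := h (Pi.single j 1)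
  rw [Matrix.mulVec_add, dotProduct_add, add_dotProduct, add_dotProduct, key, key, key, key] at h1
  rw [key] at h2
  rw [key] at h3
  simp only [Matrix.zero_apply]
  linear_combination (h1 - h2 - h3 - hs) / 2

/-- If `A ∈ sp(4,ℂ)` is nilpotent with `A³ ≠ 0`, then `A` is symplectically conjugated
to the matrix `N_λ` with rows `(0,1,λ,0)`, `(0,0,0,1)`, `(0,0,0,0)`, `(0,0,-1,0)`
for some `λ ∈ ℂ`. -/
theorem sp4_nilpotent_ker_dim_one_canonical_form
    (A : Matrix (Fin 4) (Fin 4) ℂ)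
    (hsp : Aᵀ * J4 + J4 * A = 0)
    (hnil : IsNilpotent A)
    (hA3 : A ^ 3 ≠ 0) :
    ∃ (B : Matrix (Fin 4) (Fin 4) ℂ) (l : ℂ),
      Bᵀ * J4 * B = J4 ∧
      B⁻¹ * A * B = !![0, 1, l, 0;
                       0, 0, 0, 1;
                       0, 0, 0, 0;
                       0, 0, -1, 0] := by
  have hA4 : A ^ 4 = 0 := by
    have h1 := (Matrix.isNilpotent_charpoly_sub_pow_of_isNilpotent hnil).eq_zero
    rw [sub_eq_zero] at h1
    have h3 := A.aeval_self_charpoly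
    rw [h1] at h3
    simpa using h3
  have hJJ : J4 * J4 = -1 := by
    ext i j
    fin_cases i <;> fin_cases j <;>
      simp [J4, Matrix.mul_apply, Fin.sum_univ_four, Matrix.one_apply,
        Matrix.vecHead, Matrix.vecTail]
  have hAJ : Aᵀ * J4 = -(J4 * A) := eq_neg_of_add_eq_zero_left hsp
  have key : ∀ n : ℕ, (Aᵀ)^n * J4 = (-1:ℂ)^n • (J4 * A^n) := by
    intro n
    induction n with
    | zero => simp
    | succ k ih =>
      rw [pow_succ, Matrix.mul_assoc, hAJ, Matrix.mul_neg, ← Matrix.mul_assoc, ih,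
        smul_mul_assoc, Matrix.mul_assoc, pow_succ, mul_neg_one, neg_smul, pow_succ]
  have hsym : (J4 * A ^ 3)ᵀ = J4 * A ^ 3 := by
    have hJT : J4ᵀ = -J4 := by
      ext i j
      fin_cases i <;> fin_cases j <;> simp [J4, Matrix.vecHead, Matrix.vecTail]
    rw [Matrix.transpose_mul, hJT, Matrix.transpose_pow, Matrix.mul_neg, ← Matrix.neg_mul,
      Matrix.neg_mul, key 3]
    norm_num
  have hv : ∃ v : Fin 4 → ℂ, omg v ((A ^ 3) *ᵥ v) ≠ 0 := by
    by_contra hcon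
    push_neg at hcon
    apply hA3
    have hS : J4 * A ^ 3 = 0 := by
      apply quad_zero _ hsym
      intro v
      have h5 := hcon v
      rwa [omg, Matrix.mulVec_mulVec] at h5
    calc A ^ 3 = -(J4 * (J4 * A ^ 3)) := by
            rw [← Matrix.mul_assoc, hJJ]; simp
      _ = 0 := by rw [hS]; simp
  obtain ⟨v, hc⟩ := hv
  obtain ⟨α, hα⟩ := IsAlgClosed.exists_pow_nat_eq (k := ℂ) (omg v ((A ^ 3) *ᵥ v))⁻¹ (n := 2) (by norm_num)
  have hαc : α ^ 2 * omg v ((A ^ 3) *ᵥ v) = 1 := by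
    rw [hα]; field_simp
  obtain ⟨u, hu⟩ : ∃ u : Fin 4 → ℂ, u = α • v := ⟨_, rfl⟩
  obtain ⟨w1, hw1⟩ : ∃ w, w = A *ᵥ u := ⟨_, rfl⟩
  obtain ⟨w2, hw2⟩ : ∃ w, w = A *ᵥ w1 := ⟨_, rfl⟩
  obtain ⟨w3, hw3⟩ : ∃ w, w = A *ᵥ w2 := ⟨_, rfl⟩
  have hw3' : w3 = (A ^ 3) *ᵥ u := by
    rw [hw3, hw2, hw1, Matrix.mulVec_mulVec, Matrix.mulVec_mulVec]
    rw [pow_succ, pow_two]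
  have hw4 : A *ᵥ w3 = 0 := by
    rw [hw3', Matrix.mulVec_mulVec, ← pow_succ', hA4]
    simp
  have move := sp_move A hsp
  have f03 : omg u w3 = 1 := by
    rw [hw3', hu, Matrix.mulVec_smul, omg_smul_left, omg_smul_right, ← mul_assoc, ← pow_two]
    exact hαc
  have f13 : omg w1 w3 = 0 := by
    rw [hw1, move, hw4, omg_zero_right, neg_zero]
  have f23 : omg w2 w3 = 0 := by
    rw [hw2, move, hw4, omg_zero_right, neg_zero]
  have f33 : omg w3 w3 = 0 := omg_self _
  have f12 : omg w1 w2 = -1 := by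
    rw [hw1, move, ← hw3, f03]
  have f21 : omg w2 w1 = 1 := by rw [omg_skew, f12]; ring
  have f31 : omg w3 w1 = 0 := by
    rw [hw3, move, ← hw2, omg_self, neg_zero]
  have f32 : omg w3 w2 = 0 := by rw [omg_skew, f23]; ring
  have f30 : omg w3 u = -1 := by rw [omg_skew, f03]
  have f20 : omg w2 u = 0 := by
    rw [hw2, move, ← hw1, omg_self, neg_zero]
  have f02 : omg u w2 = 0 := by rw [omg_skew, f20]; ring
  have f00 : omg u u = 0 := omg_self _
  have f11 : omg w1 w1 = 0 := omg_self _
  have f22 : omg w2 w2 = 0 := omg_self _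
  set l : ℂ := -(omg u w1) with hl
  have f01 : omg u w1 = -l := by rw [hl]; ring
  have f10 : omg w1 u = l := by rw [omg_skew, f01]; ring
  obtain ⟨b4, hb4⟩ : ∃ b, b = -(l • w3) - w1 := ⟨_, rfl⟩
  set B : Matrix (Fin 4) (Fin 4) ℂ := Matrix.of (fun i j => ![-w3, -w2, u, b4] j i) with hB
  have hcols : ∀ i, (fun k => B k i) = ![-w3, -w2, u, b4] i := by
    intro i; funext k; rfl
  have hBsymp : Bᵀ * J4 * B = J4 := by
    ext i j
    rw [conj_apply', hcols, hcols]
    fin_cases i <;> fin_cases j <;>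
      simp [hb4, J4, Matrix.vecHead, Matrix.vecTail,
        omg_neg_left, omg_neg_right, omg_sub_left, omg_sub_right,
        omg_smul_left, omg_smul_right, omg_zero_right,
        f03, f13, f23, f33, f12, f21, f31, f32,
        f30, f20, f02, f00, f11, f22, f01, f10]
  have hdet : IsUnit B.det := by
    have hd := congrArg Matrix.det hBsymp
    rw [Matrix.det_mul, Matrix.det_mul, Matrix.det_transpose] at hd
    have hdJ : J4.det * J4.det = 1 := by
      have h6 := congrArg Matrix.det hJJ
      rw [Matrix.det_mul] at h6
      have hmone : ((-1 : Matrix (Fin 4) (Fin 4) ℂ)).det = 1 := by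
        simp [Matrix.det_neg]
        norm_num
      rwa [hmone] at h6
    have hdJne : J4.det ≠ 0 := by
      intro h0; rw [h0, mul_zero] at hdJ; exact zero_ne_one hdJ
    have h2 : (B.det * B.det) * J4.det = 1 * J4.det := by linear_combination hd
    exact IsUnit.of_mul_eq_one _ (mul_right_cancel₀ hdJne h2)
  have hmain : A * B = B * !![(0:ℂ), 1, l, 0; 0, 0, 0, 1; 0, 0, 0, 0; 0, 0, -1, 0] := by
    ext i j
    have e1 := congrFun hw1 i
    have e2 := congrFun hw2 i
    have e3 := congrFun hw3 i
    have e4 := congrFun hw4 i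
    simp only [Matrix.mulVec, dotProduct, Fin.sum_univ_four, Pi.zero_apply] at e1 e2 e3 e4
    fin_cases j <;>
      simp [hB, hb4, Matrix.mul_apply, Fin.sum_univ_four, Matrix.vecHead, Matrix.vecTail]
    · linear_combination -e4
    · linear_combination e3
    · linear_combination -e1
    · linear_combination -l * e4 + e2
  refine ⟨B, l, hBsymp, ?_⟩
  rw [Matrix.mul_assoc, hmain, ← Matrix.mul_assoc, Matrix.nonsing_inv_mul B hdet,
    Matrix.one_mul]
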